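/- Let Ω be a nonempty finite type and let E = ⟨𝓔, mod⟩ be an epistemic space over Ω. If E satisfies both (ZR1) and (ZR2), then there exists a linear revision operator for E. -/
import Mathlib


open Set

/-- `minSet r S` is the set of `r`-minimal elements of `S`:
`min(S, r) = {ω ∈ S : r ω ω' for all ω' ∈ S}`. -/
def minSet {Ω : Type*} (r : Ω → Ω → Prop) (S : Set Ω) : Set Ω :=
  {ω ∈ S | ∀ ω' ∈ S, r ω ω'}

/-- A linear order as a relation: total, antisymmetric and transitive. -/
def IsLinRel {Ω : Type*} (r : Ω → Ω → Prop) : Prop :=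
  (∀ a b, r a b ∨ r b a) ∧ (∀ a b, r a b → r b a → a = b) ∧
    (∀ a b c, r a b → r b c → r a c)

/-- AGM contraction operator for the epistemic space `⟨E, md⟩` (postulates C1–C7,
formulated on model sets). -/
def IsContraction {Ω E : Type*} (md : E → Set Ω) (c : E → Set Ω → E) : Prop :=
  ∀ (Ψ : E) (A B : Set Ω),
    md Ψ ⊆ md (c Ψ A) ∧
    (¬ md Ψ ⊆ A → md (c Ψ A) ⊆ md Ψ) ∧
    (A ≠ Set.univ → ¬ md (c Ψ A) ⊆ A) ∧
    md (c Ψ A) ∩ A ⊆ md Ψ ∧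
    md (c Ψ (A ∩ B)) ⊆ md (c Ψ A) ∪ md (c Ψ B) ∧
    (¬ md (c Ψ (A ∩ B)) ⊆ B → md (c Ψ B) ⊆ md (c Ψ (A ∩ B)))

/-- AGM revision operator for the epistemic space `⟨E, md⟩` (postulates R1–R6,
formulated on model sets). -/
def IsRevision {Ω E : Type*} (md : E → Set Ω) (s : E → Set Ω → E) : Prop :=
  ∀ (Ψ : E) (A B : Set Ω),
    md (s Ψ A) ⊆ A ∧
    (md Ψ ∩ A ≠ ∅ → md (s Ψ A) = md Ψ ∩ A) ∧
    (A ≠ ∅ → md (s Ψ A) ≠ ∅) ∧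
    md (s Ψ A) ∩ B ⊆ md (s Ψ (A ∩ B)) ∧
    (md (s Ψ A) ∩ B ≠ ∅ → md (s Ψ (A ∩ B)) ⊆ md (s Ψ A) ∩ B)

/-- Postulate (ZC). -/
def ZC {Ω E : Type*} (md : E → Set Ω) : Prop :=
  ∀ (Ψ : E) (M : Set Ω), md Ψ ⊆ M → ∃ Ψ' : E, md Ψ' = M

/-- Postulate (ZR1). -/
def ZR1 {Ω E : Type*} (md : E → Set Ω) : Prop :=
  ∀ ω : Ω, ∃ Ψ : E, md Ψ = {ω}

/-- Postulate (ZR2). -/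
def ZR2 {Ω E : Type*} (md : E → Set Ω) : Prop :=
  ∀ (Ψ : E) (M : Set Ω), M ⊆ md Ψ → ∃ Ψ' : E, md Ψ' = M

/-- Postulate (Unbiased). -/
def Unbiased {Ω E : Type*} (md : E → Set Ω) : Prop :=
  ∀ M : Set Ω, ∃ Ψ : E, md Ψ = M

/-- Maxichoice contraction operator. -/
def IsMaxichoiceContraction {Ω E : Type*} (md : E → Set Ω) (c : E → Set Ω → E) : Prop :=
  IsContraction md c ∧
    ∀ Ψ : E, ∃ r : Ω → Ω → Prop, IsLinRel r ∧ ∀ A : Set Ω,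
      (¬ md Ψ ⊆ A → md (c Ψ A) = md Ψ) ∧
      (md Ψ ⊆ A → md (c Ψ A) = md Ψ ∪ minSet r Aᶜ)

/-- Linear contraction operator: a maxichoice contraction operator based on one
single linear order for all epistemic states. -/
def IsLinearContraction {Ω E : Type*} (md : E → Set Ω) (c : E → Set Ω → E) : Prop :=
  IsContraction md c ∧
    ∃ r : Ω → Ω → Prop, IsLinRel r ∧ ∀ (Ψ : E) (A : Set Ω),
      (¬ md Ψ ⊆ A → md (c Ψ A) = md Ψ) ∧
      (md Ψ ⊆ A → md (c Ψ A) = md Ψ ∪ minSet r Aᶜ)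

/-- Full meet contraction operator. -/
def IsFullMeetContraction {Ω E : Type*} (md : E → Set Ω) (c : E → Set Ω → E) : Prop :=
  IsContraction md c ∧
    ∀ (Ψ : E) (A : Set Ω),
      (¬ md Ψ ⊆ A → md (c Ψ A) = md Ψ) ∧
      (md Ψ ⊆ A → md (c Ψ A) = md Ψ ∪ Aᶜ)

/-- Maxichoice revision operator. -/
def IsMaxichoiceRevision {Ω E : Type*} (md : E → Set Ω) (s : E → Set Ω → E) : Prop :=
  IsRevision md s ∧
    ∀ Ψ : E, ∃ r : Ω → Ω → Prop, IsLinRel r ∧ ∀ A : Set Ω,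
      (md Ψ ∩ A ≠ ∅ → md (s Ψ A) = md Ψ ∩ A) ∧
      (md Ψ ∩ A = ∅ → md (s Ψ A) = minSet r A)

/-- Linear revision operator: a maxichoice revision operator based on one single
linear order for all epistemic states. -/
def IsLinearRevision {Ω E : Type*} (md : E → Set Ω) (s : E → Set Ω → E) : Prop :=
  IsRevision md s ∧
    ∃ r : Ω → Ω → Prop, IsLinRel r ∧ ∀ (Ψ : E) (A : Set Ω),
      (md Ψ ∩ A ≠ ∅ → md (s Ψ A) = md Ψ ∩ A) ∧
      (md Ψ ∩ A = ∅ → md (s Ψ A) = minSet r A)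

/-- Full meet revision operator. -/
def IsFullMeetRevision {Ω E : Type*} (md : E → Set Ω) (s : E → Set Ω → E) : Prop :=
  IsRevision md s ∧
    ∀ (Ψ : E) (A : Set Ω),
      (md Ψ ∩ A ≠ ∅ → md (s Ψ A) = md Ψ ∩ A) ∧
      (md Ψ ∩ A = ∅ → md (s Ψ A) = A)


/-- If `⟨E, md⟩` satisfies (ZR1) and (ZR2), then there exists a
linear revision operator for `⟨E, md⟩`. -/
theorem exists_linearRevision_of_ZR1_ZR2 {Ω E : Type*} [Fintype Ω] [Nonempty Ω] [Nonempty E]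
    (md : E → Set Ω)
    (h1 : ZR1 md) (h2 : ZR2 md) :
    ∃ s : E → Set Ω → E, IsLinearRevision md s := by
  classical
  obtain ⟨f, hf⟩ : ∃ f : Ω → ℕ, Function.Injective f :=
    ⟨fun ω => ((Fintype.equivFin Ω) ω : ℕ), fun a b h =>
      (Fintype.equivFin Ω).injective (Fin.val_injective h)⟩
  set r : Ω → Ω → Prop := fun a b => f a ≤ f b with hr
  have hlin : IsLinRel r :=
    ⟨fun a b => le_total _ _, fun a b h1' h2' => hf (le_antisymm h1' h2'),
      fun a b c => le_trans⟩
  have hmin_sub : ∀ A : Set Ω, minSet r A ⊆ A := fun A ω h => h.1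
  have hmin_ne : ∀ A : Set Ω, A ≠ ∅ → (minSet r A).Nonempty := by
    intro A hA
    obtain ⟨a, ha, hmin⟩ :=
      Set.exists_min_image A f A.toFinite (Set.nonempty_iff_ne_empty.mpr hA)
    exact ⟨a, ha, hmin⟩
  have hmin_sing : ∀ (A : Set Ω), ∀ a ∈ minSet r A, ∀ b ∈ minSet r A, a = b :=
    fun A a ha b hb => hf (le_antisymm (ha.2 b hb.1) (hb.2 a ha.1))
  have hex : ∀ (Ψ : E) (A : Set Ω), ∃ Ψ' : E,
      md Ψ' = if md Ψ ∩ A = ∅ then minSet r A else md Ψ ∩ A := by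
    intro Ψ A
    by_cases h : md Ψ ∩ A = ∅
    · rw [if_pos h]
      rcases Set.eq_empty_or_nonempty A with hA | hA
      · subst hA
        have he : minSet r (∅ : Set Ω) = ∅ :=
          Set.eq_empty_of_subset_empty (hmin_sub _)
        rw [he]
        exact h2 Ψ ∅ (Set.empty_subset _)
      · obtain ⟨a, ha⟩ := hmin_ne A (Set.nonempty_iff_ne_empty.mp hA)
        obtain ⟨Ψ', hΨ'⟩ := h1 a
        refine ⟨Ψ', ?_⟩
        rw [hΨ']
        ext x
        simp only [Set.mem_singleton_iff]
        constructor
        · rintro rfl; exact ha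
        · intro hx; exact hmin_sing A x hx a ha
    · rw [if_neg h]
      exact h2 Ψ _ Set.inter_subset_left
  choose s hs using hex
  have hsA : ∀ (Ψ : E) (A : Set Ω), md Ψ ∩ A ≠ ∅ → md (s Ψ A) = md Ψ ∩ A := by
    intro Ψ A h; rw [hs, if_neg h]
  have hsB : ∀ (Ψ : E) (A : Set Ω), md Ψ ∩ A = ∅ → md (s Ψ A) = minSet r A := by
    intro Ψ A h; rw [hs, if_pos h]
  refine ⟨s, ?_, r, hlin, fun Ψ A => ⟨hsA Ψ A, hsB Ψ A⟩⟩
  intro Ψ A B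
  refine ⟨?_, hsA Ψ A, ?_, ?_, ?_⟩
  · -- R1
    by_cases h : md Ψ ∩ A = ∅
    · rw [hsB Ψ A h]; exact hmin_sub A
    · rw [hsA Ψ A h]; exact Set.inter_subset_right
  · -- R3
    intro hA
    by_cases h : md Ψ ∩ A = ∅
    · rw [hsB Ψ A h]
      exact Set.nonempty_iff_ne_empty.mp (hmin_ne A hA)
    · rw [hsA Ψ A h]; exact h
  · -- R5
    by_cases h : md Ψ ∩ A = ∅
    · have hAB : md Ψ ∩ (A ∩ B) = ∅ := by
        apply Set.eq_empty_of_subset_empty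
        rw [← h]
        exact Set.inter_subset_inter_right _ Set.inter_subset_left
      rw [hsB Ψ A h, hsB Ψ _ hAB]
      rintro ω ⟨⟨hωA, hωmin⟩, hωB⟩
      exact ⟨⟨hωA, hωB⟩, fun ω' hω' => hωmin ω' hω'.1⟩
    · rw [hsA Ψ A h]
      by_cases hAB : md Ψ ∩ (A ∩ B) = ∅
      · intro ω hω
        exact absurd (Set.eq_empty_iff_forall_notMem.mp hAB ω
          ⟨hω.1.1, hω.1.2, hω.2⟩) (fun h' => h')
      · rw [hsA Ψ _ hAB]
        intro ω hω
        exact ⟨hω.1.1, hω.1.2, hω.2⟩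
  · -- R6
    intro hne
    by_cases h : md Ψ ∩ A = ∅
    · have hAB : md Ψ ∩ (A ∩ B) = ∅ := by
        apply Set.eq_empty_of_subset_empty
        rw [← h]
        exact Set.inter_subset_inter_right _ Set.inter_subset_left
      rw [hsB Ψ A h] at hne ⊢
      rw [hsB Ψ _ hAB]
      obtain ⟨ω, hωmin, hωB⟩ := Set.nonempty_iff_ne_empty.mpr hne
      have hωAB : ω ∈ minSet r (A ∩ B) :=
        ⟨⟨hωmin.1, hωB⟩, fun ω' hω' => hωmin.2 ω' hω'.1⟩
      intro x hx
      have hxω : x = ω := hmin_sing (A ∩ B) x hx ω hωAB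
      subst hxω
      exact ⟨hωmin, hωB⟩
    · rw [hsA Ψ A h] at hne ⊢
      have hAB : md Ψ ∩ (A ∩ B) ≠ ∅ := by
        intro h'
        apply hne
        apply Set.eq_empty_of_subset_empty
        rw [← h']
        intro x hx
        exact ⟨hx.1.1, hx.1.2, hx.2⟩
      rw [hsA Ψ _ hAB]
      intro ω hω
      exact ⟨⟨hω.1, hω.2.1⟩, hω.2.2⟩
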